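/- Unitarity of the R-matrix. For all positive integers M, N with M ≠ N (set n = M+N), every q ∈ ℂ with 0 < |q| < 1, and every z ∈ ℂ with z ≠ 0, q²z ≠ 1 and z ≠ q², one has R̄(z) · P · R̄(1/z) · P = Id on ℂⁿ ⊗ ℂⁿ, where P is the graded permutation operator. (Equivalently, R₁₂(z) R₂₁(1/z) = 1 with R₂₁(z) = P R₁₂(z) P.) -/

import Mathlib

/-- `a(z) = (z−q²)/(1−q²z)`. -/
noncomputable def aR (q z : ℂ) : ℂ := (z - q ^ 2) / (1 - q ^ 2 * z)

/-- `b(z) = q(1−z)/(1−q²z)`. -/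
noncomputable def bR (q z : ℂ) : ℂ := q * (1 - z) / (1 - q ^ 2 * z)

/-- `c(z) = (1−q²)/(1−q²z)`. -/
noncomputable def cR (q z : ℂ) : ℂ := (1 - q ^ 2) / (1 - q ^ 2 * z)

/-- Parity of a basis index: `0` for the first `M` indices, `1` for the rest. -/
def par (M : ℕ) {n : ℕ} (i : Fin n) : ℕ := if (i : ℕ) < M then 0 else 1

/-- The R-matrix `R̄(z)` of `U_q(sl^(M|N))` acting on `ℂⁿ ⊗ ℂⁿ`, `n = M+N`;
the row index is the pair `(k₁,k₂)` and the column index the pair `(j₁,j₂)`. -/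
noncomputable def Rbar (M N : ℕ) (q z : ℂ) :
    Matrix (Fin (M + N) × Fin (M + N)) (Fin (M + N) × Fin (M + N)) ℂ := fun k j =>
  if k.1 = j.1 ∧ k.2 = j.2 then
    (if j.1 = j.2 then (if (j.1 : ℕ) < M then -1 else aR q z) else -bR q z)
  else if k.1 = j.2 ∧ k.2 = j.1 then
    (-1 : ℂ) ^ (par M k.1 * par M k.2) *
      (if (k.1 : ℕ) < (k.2 : ℕ) then cR q z else z * cR q z)
  else 0

/-- The graded permutation operator `P` on `ℂⁿ ⊗ ℂⁿ`. -/
noncomputable def Pg (M n : ℕ) : Matrix (Fin n × Fin n) (Fin n × Fin n) ℂ := fun k j =>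
  if j.1 = k.2 ∧ j.2 = k.1 then (-1 : ℂ) ^ (par M k.1 * par M k.2) else 0

lemma mulPg_apply {M n : ℕ} (A : Matrix (Fin n × Fin n) (Fin n × Fin n) ℂ)
    (k j : Fin n × Fin n) :
    (A * Pg M n) k j = A k (j.2, j.1) * (-1:ℂ)^(par M j.2 * par M j.1) := by
  rw [Matrix.mul_apply]
  rw [Finset.sum_eq_single ((j.2, j.1) : Fin n × Fin n)]
  · simp [Pg]
  · intro m _ hm
    have hcond : ¬ (j.1 = m.2 ∧ j.2 = m.1) := by
      rintro ⟨h1, h2⟩; exact hm (Prod.ext h2.symm h1.symm)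
    simp [Pg, hcond]
  · intro h; exact absurd (Finset.mem_univ _) h

lemma Rbar_apply_ne {M N : ℕ} (q z : ℂ) (k c : Fin (M+N) × Fin (M+N))
    (h1 : c ≠ k) (h2 : c ≠ (k.2, k.1)) : Rbar M N q z k c = 0 := by
  unfold Rbar
  rw [if_neg, if_neg]
  · rintro ⟨ha, hb⟩; exact h2 (Prod.ext hb.symm ha.symm)
  · rintro ⟨ha, hb⟩; exact h1 (Prod.ext ha.symm hb.symm)

lemma Rbar_swap {M N : ℕ} (q z : ℂ) (k1 k2 : Fin (M+N)) (h : k1 ≠ k2) :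
    Rbar M N q z (k1,k2) (k2,k1)
      = (-1:ℂ)^(par M k1 * par M k2) * (if (k1:ℕ) < (k2:ℕ) then cR q z else z * cR q z) := by
  unfold Rbar
  rw [if_neg, if_pos ⟨rfl, rfl⟩]
  rintro ⟨h1, _⟩; exact h h1

lemma Rbar_diag_ne {M N : ℕ} (q z : ℂ) (k1 k2 : Fin (M+N)) (h : k1 ≠ k2) :
    Rbar M N q z (k1,k2) (k1,k2) = -bR q z := by
  unfold Rbar
  rw [if_pos ⟨rfl,rfl⟩, if_neg h]

lemma Rbar_diag_eq {M N : ℕ} (q z : ℂ) (k1 : Fin (M+N)) :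
    Rbar M N q z (k1,k1) (k1,k1) = if (k1:ℕ) < M then -1 else aR q z := by
  unfold Rbar
  rw [if_pos ⟨rfl,rfl⟩, if_pos rfl]

lemma eps_sq (e : ℕ) : ((-1:ℂ)^e) * ((-1:ℂ)^e) = 1 := by
  rw [← pow_add, ← two_mul, pow_mul]; simp

lemma aR_inv (q z : ℂ) (hz : z ≠ 0) (hzq : z - q^2 ≠ 0) : aR q (1/z) = (1 - q^2*z) / (z - q^2) := by
  unfold aR
  have hd2 : 1 - q ^ 2 * (1/z) = (z - q^2)/z := by field_simp
  rw [hd2, div_div_eq_mul_div]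
  field_simp; try ring

lemma bR_inv (q z : ℂ) (hz : z ≠ 0) (hzq : z - q^2 ≠ 0) : bR q (1/z) = (q*(z-1)) / (z - q^2) := by
  unfold bR
  have hd2 : 1 - q ^ 2 * (1/z) = (z - q^2)/z := by field_simp
  rw [hd2, div_div_eq_mul_div]
  field_simp; try ring

lemma cR_inv (q z : ℂ) (hz : z ≠ 0) (hzq : z - q^2 ≠ 0) : cR q (1/z) = (z*(1 - q^2)) / (z - q^2) := by
  unfold cR
  have hd2 : 1 - q ^ 2 * (1/z) = (z - q^2)/z := by field_simp
  rw [hd2, div_div_eq_mul_div]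
  field_simp; try ring

lemma aa_one (q z : ℂ) (hz : z ≠ 0) (hd1 : 1 - q^2*z ≠ 0) (hzq : z - q^2 ≠ 0) :
    aR q z * aR q (1/z) = 1 := by
  rw [aR_inv q z hz hzq]; unfold aR; field_simp
  rw [div_self (by rw [mul_comm]; exact hd1)]

lemma cc_bb (q z : ℂ) (hz : z ≠ 0) (hd1 : 1 - q^2*z ≠ 0) (hzq : z - q^2 ≠ 0) :
    cR q z * cR q (1/z) + bR q z * bR q (1/z) = 1 := by
  rw [cR_inv q z hz hzq, bR_inv q z hz hzq]; unfold bR cR; field_simp; try ring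

lemma cb1 (q z : ℂ) (hz : z ≠ 0) (hd1 : 1 - q^2*z ≠ 0) (hzq : z - q^2 ≠ 0) :
    cR q z * bR q (1/z) + bR q z * ((1/z) * cR q (1/z)) = 0 := by
  rw [cR_inv q z hz hzq, bR_inv q z hz hzq]; unfold bR cR; field_simp; try ring

lemma cb2 (q z : ℂ) (hz : z ≠ 0) (hd1 : 1 - q^2*z ≠ 0) (hzq : z - q^2 ≠ 0) :
    (z * cR q z) * bR q (1/z) + bR q z * cR q (1/z) = 0 := by
  rw [cR_inv q z hz hzq, bR_inv q z hz hzq]; unfold bR cR; field_simp; try ring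


theorem R_unitarity (M N : ℕ) (hM : 1 ≤ M) (hN : 1 ≤ N) (hMN : M ≠ N)
    (q : ℂ) (hq0 : 0 < ‖q‖) (hq1 : ‖q‖ < 1)
    (z : ℂ) (hz : z ≠ 0) (hz1 : q ^ 2 * z ≠ 1) (hz2 : z ≠ q ^ 2) :
    Rbar M N q z * Pg M (M + N) * Rbar M N q (1 / z) * Pg M (M + N) = 1 := by
  have hd1 : (1:ℂ) - q^2*z ≠ 0 := sub_ne_zero.mpr (fun h => hz1 h.symm)
  have hzq : z - q^2 ≠ 0 := sub_ne_zero.mpr hz2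
  rw [Matrix.mul_assoc]
  ext k j
  obtain ⟨k1, k2⟩ := k
  obtain ⟨j1, j2⟩ := j
  rw [Matrix.mul_apply, Matrix.one_apply]
  have hsupp : ∀ m : Fin (M+N) × Fin (M+N), m ≠ (k1,k2) → m ≠ (k2,k1) →
      (Rbar M N q z * Pg M (M+N)) (k1,k2) m * (Rbar M N q (1/z) * Pg M (M+N)) m (j1,j2) = 0 := by
    intro m h1 h2
    rw [mulPg_apply]
    rw [Rbar_apply_ne q z (k1,k2) (m.2,m.1), zero_mul, zero_mul]
    · intro h; apply h2
      have e1 : m.2 = k1 := congrArg Prod.fst h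
      have e2 : m.1 = k2 := congrArg Prod.snd h
      exact Prod.ext e2 e1
    · intro h; apply h1
      have e1 : m.2 = k2 := congrArg Prod.fst h
      have e2 : m.1 = k1 := congrArg Prod.snd h
      exact Prod.ext e2 e1
  by_cases hkk : k1 = k2
  · subst hkk
    rw [Finset.sum_eq_single ((k1,k1) : Fin (M+N) × Fin (M+N))]
    · rw [mulPg_apply, mulPg_apply]
      by_cases hj : (k1,k1) = ((j1,j2) : Fin (M+N) × Fin (M+N))
      · have e1 : k1 = j1 := congrArg Prod.fst hj
        have e2 : k1 = j2 := congrArg Prod.snd hj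
        subst e1; subst e2
        rw [if_pos rfl]
        show Rbar M N q z (k1,k1) (k1,k1) * _ * (Rbar M N q (1/z) (k1,k1) (k1,k1) * _) = 1
        rw [Rbar_diag_eq, Rbar_diag_eq]
        by_cases hM' : (k1:ℕ) < M
        · rw [if_pos hM', if_pos hM', mul_mul_mul_comm, eps_sq]
          ring
        · rw [if_neg hM', if_neg hM', mul_mul_mul_comm, eps_sq, mul_one,
            aa_one q z hz hd1 hzq]
      · rw [if_neg hj]
        have hz0 : Rbar M N q (1/z) (k1,k1) (j2,j1) = 0 := by
          apply Rbar_apply_ne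
          · intro h; apply hj
            have e1 : j2 = k1 := congrArg Prod.fst h
            have e2 : j1 = k1 := congrArg Prod.snd h
            rw [e1, e2]
          · intro h; apply hj
            have e1 : j2 = k1 := congrArg Prod.fst h
            have e2 : j1 = k1 := congrArg Prod.snd h
            rw [e1, e2]
        rw [hz0, zero_mul, mul_zero]
    · intro m _ hm; exact hsupp m hm hm
    · intro h; exact absurd (Finset.mem_univ _) h
  · -- off-diagonal row: k1 ≠ k2
    have hkkv : (k1:ℕ) ≠ (k2:ℕ) := fun h => hkk (Fin.val_injective h)
    have hpair : ((k1,k2) : Fin (M+N) × Fin (M+N)) ≠ (k2,k1) := by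
      intro h; exact hkk (congrArg Prod.fst h)
    have hsum : ∑ m : Fin (M+N) × Fin (M+N),
        (Rbar M N q z * Pg M (M+N)) (k1,k2) m * (Rbar M N q (1/z) * Pg M (M+N)) m (j1,j2)
        = ∑ m ∈ ({(k1,k2),(k2,k1)} : Finset (Fin (M+N) × Fin (M+N))),
            (Rbar M N q z * Pg M (M+N)) (k1,k2) m * (Rbar M N q (1/z) * Pg M (M+N)) m (j1,j2) := by
      refine (Finset.sum_subset (Finset.subset_univ _) ?_).symm
      intro m _ hm
      rw [Finset.mem_insert, Finset.mem_singleton] at hm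
      push_neg at hm
      exact hsupp m hm.1 hm.2
    rw [hsum, Finset.sum_pair hpair, mulPg_apply, mulPg_apply, mulPg_apply, mulPg_apply]
    simp only
    rw [Rbar_swap q z k1 k2 hkk, Rbar_diag_ne q z k1 k2 hkk]
    have hcm : par M k2 * par M k1 = par M k1 * par M k2 := Nat.mul_comm _ _
    rw [hcm]
    set E := (-1:ℂ)^(par M k1 * par M k2) with hE
    have hE2 : E * E = 1 := eps_sq _
    by_cases hjk : ((j1,j2) : Fin (M+N) × Fin (M+N)) = (k1,k2)
    · have e1 : k1 = j1 := (congrArg Prod.fst hjk).symm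
      have e2 : k2 = j2 := (congrArg Prod.snd hjk).symm
      subst e1; subst e2
      rw [if_pos rfl]
      rw [Rbar_swap q (1/z) k1 k2 hkk, Rbar_diag_ne q (1/z) k2 k1 (Ne.symm hkk), hcm, ← hE]
      by_cases hlt : (k1:ℕ) < (k2:ℕ)
      · rw [if_pos hlt, if_pos hlt]
        calc E * cR q z * E * (E * cR q (1/z) * E) + -bR q z * E * (-bR q (1/z) * E)
            = (cR q z * cR q (1/z)) * ((E*E)*(E*E)) + (bR q z * bR q (1/z)) * (E*E) := by ring
          _ = 1 := by rw [hE2]; simpa using cc_bb q z hz hd1 hzq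
      · rw [if_neg hlt, if_neg hlt]
        calc E * (z * cR q z) * E * (E * (1/z * cR q (1/z)) * E) + -bR q z * E * (-bR q (1/z) * E)
            = (z * (1/z)) * (cR q z * cR q (1/z)) * ((E*E)*(E*E)) + (bR q z * bR q (1/z)) * (E*E) := by ring
          _ = 1 := by
              rw [hE2, mul_one_div_cancel hz]
              simpa using cc_bb q z hz hd1 hzq
    · by_cases hjs : ((j1,j2) : Fin (M+N) × Fin (M+N)) = (k2,k1)
      · have e1 : k2 = j1 := (congrArg Prod.fst hjs).symm
        have e2 : k1 = j2 := (congrArg Prod.snd hjs).symm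
        subst e1; subst e2
        rw [if_neg (Ne.symm hjk)]
        -- columns (j2,j1) = (k1,k2)
        rw [Rbar_diag_ne q (1/z) k1 k2 hkk]
        have hswap2 : Rbar M N q (1/z) (k2,k1) (k1,k2)
            = (-1:ℂ)^(par M k2 * par M k1) *
              (if (k2:ℕ) < (k1:ℕ) then cR q (1/z) else (1/z) * cR q (1/z)) :=
          Rbar_swap q (1/z) k2 k1 (Ne.symm hkk)
        rw [hswap2, hcm, ← hE]
        by_cases hlt : (k1:ℕ) < (k2:ℕ)
        · have hlt' : ¬ (k2:ℕ) < (k1:ℕ) := by omega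
          rw [if_pos hlt, if_neg hlt']
          calc E * cR q z * E * (-bR q (1/z) * E) + -bR q z * E * (E * (1/z * cR q (1/z)) * E)
              = -((cR q z * bR q (1/z) + bR q z * ((1/z) * cR q (1/z))) * ((E*E)*E)) := by ring
            _ = 0 := by rw [cb1 q z hz hd1 hzq]; ring
        · have hlt' : (k2:ℕ) < (k1:ℕ) := by omega
          rw [if_neg hlt, if_pos hlt']
          calc E * (z * cR q z) * E * (-bR q (1/z) * E) + -bR q z * E * (E * cR q (1/z) * E)
              = -(((z * cR q z) * bR q (1/z) + bR q z * cR q (1/z)) * ((E*E)*E)) := by ring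
            _ = 0 := by rw [cb2 q z hz hd1 hzq]; ring
      · rw [if_neg (Ne.symm hjk)]
        have h01 : Rbar M N q (1/z) (k1,k2) (j2,j1) = 0 := by
          apply Rbar_apply_ne
          · intro h; apply hjs
            have e1 : j2 = k1 := congrArg Prod.fst h
            have e2 : j1 = k2 := congrArg Prod.snd h
            rw [e1, e2]
          · intro h; apply hjk
            have e1 : j2 = k2 := congrArg Prod.fst h
            have e2 : j1 = k1 := congrArg Prod.snd h
            rw [e1, e2]
        have h02 : Rbar M N q (1/z) (k2,k1) (j2,j1) = 0 := by
          apply Rbar_apply_ne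
          · intro h; apply hjk
            have e1 : j2 = k2 := congrArg Prod.fst h
            have e2 : j1 = k1 := congrArg Prod.snd h
            rw [e1, e2]
          · intro h; apply hjs
            have e1 : j2 = k1 := congrArg Prod.fst h
            have e2 : j1 = k2 := congrArg Prod.snd h
            rw [e1, e2]
        rw [h01, h02]
        ring
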